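/- Let G be a profinite group that is the inverse limit of its finite quotients G/H_n, where H_n is a decreasing sequence of open normal subgroups with trivial intersection. Suppose a closed subgroup Γ of GL_d(ℤ_p) acts continuously on ℤ_p^d and, for some fixed N and all n > N and every z in U = ℤ_p^d ∖ pℤ_p^d, the image of (z + p^n ℤ_p^d) ∩ (Γ·z) in ℤ_p^d / p^{n+1}ℤ_p^d equals the image of z + p^n ℤ_p^d, and moreover both sets have exactly p^d elements. Then every Γ-orbit in U is open in U. -/
import Mathlib


open Matrix

/-- The orbit of `z ∈ ℤ_p^d` under a subgroup `Γ ≤ GL_d(ℤ_p)` (acting by matrix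
multiplication). -/
def glOrbit (p : ℕ) [Fact p.Prime] (d : ℕ)
    (Γ : Subgroup (GL (Fin d) ℤ_[p])) (z : Fin d → ℤ_[p]) : Set (Fin d → ℤ_[p]) :=
  {x | ∃ g ∈ Γ, x = Matrix.mulVec ((g : GL (Fin d) ℤ_[p]) : Matrix (Fin d) (Fin d) ℤ_[p]) z}

section Aux

variable (p : ℕ) [Fact p.Prime] (d : ℕ) (Γ : Subgroup (GL (Fin d) ℤ_[p]))

instance auxMatCompact : CompactSpace (Matrix (Fin d) (Fin d) ℤ_[p]) := Pi.compactSpace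

instance auxMatOpCompact : CompactSpace ((Matrix (Fin d) (Fin d) ℤ_[p])ᵐᵒᵖ) :=
  MulOpposite.opHomeomorph.compactSpace

lemma aux_mem_self (z : Fin d → ℤ_[p]) : z ∈ glOrbit p d Γ z :=
  ⟨1, one_mem _, by simp⟩

lemma aux_orbit_trans {z x : Fin d → ℤ_[p]} (hx : x ∈ glOrbit p d Γ z) :
    glOrbit p d Γ x = glOrbit p d Γ z := by
  obtain ⟨g, hg, rfl⟩ := hx
  ext w
  constructor
  · rintro ⟨h, hh, rfl⟩
    exact ⟨h * g, mul_mem hh hg, by rw [Units.val_mul, ← mulVec_mulVec]⟩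
  · rintro ⟨h, hh, rfl⟩
    refine ⟨h * g⁻¹, mul_mem hh (inv_mem hg), ?_⟩
    rw [mulVec_mulVec, ← Units.val_mul, mul_assoc, inv_mul_cancel, mul_one]

lemma aux_orbit_notdvd {z x : Fin d → ℤ_[p]} (hz : ∃ i, ¬ (p : ℤ_[p]) ∣ z i)
    (hx : x ∈ glOrbit p d Γ z) : ∃ i, ¬ (p : ℤ_[p]) ∣ x i := by
  obtain ⟨g, hg, rfl⟩ := hx
  by_contra h
  push_neg at h
  obtain ⟨i, hi⟩ := hz
  apply hi
  have hz' : z i = ∑ j, ((↑g⁻¹ : Matrix (Fin d) (Fin d) ℤ_[p]) i j) *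
      ((↑g : Matrix (Fin d) (Fin d) ℤ_[p]).mulVec z) j := by
    have : (∑ j, ((↑g⁻¹ : Matrix (Fin d) (Fin d) ℤ_[p]) i j) *
        ((↑g : Matrix (Fin d) (Fin d) ℤ_[p]).mulVec z) j) =
        ((↑g⁻¹ : Matrix (Fin d) (Fin d) ℤ_[p]).mulVec
          ((↑g : Matrix (Fin d) (Fin d) ℤ_[p]).mulVec z)) i := rfl
    rw [this, mulVec_mulVec, ← Units.val_mul, inv_mul_cancel, Units.val_one, one_mulVec]
  rw [hz']
  exact Finset.dvd_sum fun j _ => Dvd.dvd.mul_left (h j) _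

lemma aux_isClosed (hΓ : IsClosed (Γ : Set (GL (Fin d) ℤ_[p]))) (z : Fin d → ℤ_[p]) :
    IsClosed (glOrbit p d Γ z) := by
  have hcont : Continuous fun g : GL (Fin d) ℤ_[p] =>
      (↑g : Matrix (Fin d) (Fin d) ℤ_[p]).mulVec z :=
    Units.continuous_val.matrix_mulVec continuous_const
  have hrange : IsClosed (Set.range (Units.embedProduct (Matrix (Fin d) (Fin d) ℤ_[p]))) := by
    have heq : Set.range (Units.embedProduct (Matrix (Fin d) (Fin d) ℤ_[p])) =
        {x : Matrix (Fin d) (Fin d) ℤ_[p] × (Matrix (Fin d) (Fin d) ℤ_[p])ᵐᵒᵖ |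
          x.1 * x.2.unop = 1} ∩
        {x : Matrix (Fin d) (Fin d) ℤ_[p] × (Matrix (Fin d) (Fin d) ℤ_[p])ᵐᵒᵖ |
          x.2.unop * x.1 = 1} := by
      ext ⟨a, b⟩
      constructor
      · rintro ⟨u, hu⟩
        rw [← hu]
        simp [Units.embedProduct]
      · rintro ⟨h1, h2⟩
        refine ⟨⟨a, b.unop, h1, h2⟩, ?_⟩
        show (a, MulOpposite.op b.unop) = (a, b)
        rw [MulOpposite.op_unop]
    rw [heq]
    have hc1 : Continuous fun x : Matrix (Fin d) (Fin d) ℤ_[p] ×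
        (Matrix (Fin d) (Fin d) ℤ_[p])ᵐᵒᵖ => x.1 * x.2.unop :=
      continuous_fst.mul (MulOpposite.continuous_unop.comp continuous_snd)
    have hc2 : Continuous fun x : Matrix (Fin d) (Fin d) ℤ_[p] ×
        (Matrix (Fin d) (Fin d) ℤ_[p])ᵐᵒᵖ => x.2.unop * x.1 :=
      (MulOpposite.continuous_unop.comp continuous_snd).mul continuous_fst
    exact (isClosed_eq hc1 continuous_const).inter (isClosed_eq hc2 continuous_const)
  have hΓc : IsCompact (Γ : Set (GL (Fin d) ℤ_[p]))  := by
    rw [Units.isEmbedding_embedProduct.isCompact_iff]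
    obtain ⟨C, hC, hCeq⟩ := Units.isInducing_embedProduct.isClosed_iff.mp hΓ
    rw [← hCeq, Set.image_preimage_eq_inter_range]
    exact (hC.inter hrange).isCompact
  have horb : glOrbit p d Γ z =
      (fun g : GL (Fin d) ℤ_[p] => (↑g : Matrix (Fin d) (Fin d) ℤ_[p]).mulVec z) ''
        (Γ : Set (GL (Fin d) ℤ_[p])) := by
    ext w
    constructor
    · rintro ⟨g, hg, rfl⟩; exact ⟨g, hg, rfl⟩
    · rintro ⟨g, hg, rfl⟩; exact ⟨g, hg, rfl⟩
  rw [horb]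
  exact (hΓc.image hcont).isClosed

end Aux

/-- Let `Γ` be a closed subgroup of `GL_d(ℤ_p)` acting on `ℤ_p^d`,
and `U = ℤ_p^d ∖ pℤ_p^d`.  Suppose that for some `N` and all `n > N` and all `z ∈ U`,
the image of `(z + pⁿℤ_p^d) ∩ Γ·z` in `ℤ_p^d/p^{n+1}ℤ_p^d` equals the image of
`z + pⁿℤ_p^d`, and both images have exactly `p^d` elements.  Then every `Γ`-orbit in
`U` is open in `U`. -/
theorem stmt11 (p : ℕ) [Fact p.Prime] (d : ℕ)
    (Γ : Subgroup (GL (Fin d) ℤ_[p]))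
    (hΓ : IsClosed (Γ : Set (GL (Fin d) ℤ_[p])))
    (U : Set (Fin d → ℤ_[p]))
    (hU : U = {x : Fin d → ℤ_[p] | ∃ i, ¬ (p : ℤ_[p]) ∣ x i})
    (N : ℕ)
    (hmain : ∀ n : ℕ, N < n → ∀ z ∈ U,
      (fun x : Fin d → ℤ_[p] => fun i => PadicInt.toZModPow (n + 1) (x i)) ''
          ({w | ∃ u : Fin d → ℤ_[p], w = z + (p : ℤ_[p]) ^ n • u} ∩ glOrbit p d Γ z) =
        (fun x : Fin d → ℤ_[p] => fun i => PadicInt.toZModPow (n + 1) (x i)) ''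
          {w | ∃ u : Fin d → ℤ_[p], w = z + (p : ℤ_[p]) ^ n • u} ∧
      Nat.card ((fun x : Fin d → ℤ_[p] => fun i => PadicInt.toZModPow (n + 1) (x i)) ''
          ({w | ∃ u : Fin d → ℤ_[p], w = z + (p : ℤ_[p]) ^ n • u} ∩ glOrbit p d Γ z)) =
        p ^ d ∧
      Nat.card ((fun x : Fin d → ℤ_[p] => fun i => PadicInt.toZModPow (n + 1) (x i)) ''
          {w | ∃ u : Fin d → ℤ_[p], w = z + (p : ℤ_[p]) ^ n • u}) = p ^ d) :
    ∀ z ∈ U, IsOpen (Subtype.val ⁻¹' glOrbit p d Γ z : Set U) := by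
  have hp1 : (1 : ℝ) < (p : ℝ) := by
    exact_mod_cast (Fact.out : p.Prime).one_lt
  -- Key density claim: the ball of radius `p^{-(N+1)}` around a point of `U` is
  -- contained in the (closed) orbit of that point.
  have key : ∀ z ∈ U, ∀ y : Fin d → ℤ_[p],
      (∀ i, (p : ℤ_[p]) ^ (N + 1) ∣ y i - z i) → y ∈ glOrbit p d Γ z := by
    intro z hz y hy
    have hclosed := aux_isClosed p d Γ hΓ z
    rw [← hclosed.closure_eq]
    have happrox : ∀ k : ℕ, ∃ x ∈ glOrbit p d Γ z,
        ∀ i, (p : ℤ_[p]) ^ (N + 1 + k) ∣ y i - x i := by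
      intro k
      induction k with
      | zero => exact ⟨z, aux_mem_self p d Γ z, by simpa using hy⟩
      | succ k ih =>
        obtain ⟨x, hxo, hx⟩ := ih
        set m := N + 1 + k with hm
        have hxU : x ∈ U := by
          rw [hU]
          have hz' : ∃ i, ¬ (p : ℤ_[p]) ∣ z i := by have h := hz; rwa [hU] at h
          exact aux_orbit_notdvd p d Γ hz' hxo
        have hmm := (hmain m (by omega) x hxU).1
        choose u hu using fun i => hx i
        have hyb : y ∈ {w | ∃ u : Fin d → ℤ_[p], w = x + (p : ℤ_[p]) ^ m • u} := by
          refine ⟨u, funext fun i => ?_⟩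
          have h1 := hu i
          simp only [Pi.add_apply, Pi.smul_apply, smul_eq_mul]
          linear_combination h1
        have himg : (fun i => PadicInt.toZModPow (m + 1) (y i)) ∈
            (fun x : Fin d → ℤ_[p] => fun i => PadicInt.toZModPow (m + 1) (x i)) ''
              {w | ∃ u : Fin d → ℤ_[p], w = x + (p : ℤ_[p]) ^ m • u} :=
          Set.mem_image_of_mem _ hyb
        rw [← hmm] at himg
        obtain ⟨w, ⟨hwball, hworb⟩, hwim⟩ := himg
        refine ⟨w, ?_, fun i => ?_⟩
        · rw [← aux_orbit_trans p d Γ hxo]; exact hworb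
        · have h0 : PadicInt.toZModPow (m + 1) (y i - w i) = 0 := by
            have h1 := congrFun hwim i
            dsimp only at h1
            simp only [map_sub]
            rw [h1, sub_self]
          have hmem : y i - w i ∈ Ideal.span {(p : ℤ_[p]) ^ (m + 1)} := by
            rw [← PadicInt.ker_toZModPow]
            exact h0
          rw [Ideal.mem_span_singleton] at hmem
          have : N + 1 + (k + 1) = m + 1 := by omega
          rw [this]
          exact hmem
    rw [Metric.mem_closure_iff]
    intro ε hε
    obtain ⟨k, hk⟩ := exists_pow_lt_of_lt_one hε
      (show (p : ℝ)⁻¹ < 1 by rw [inv_lt_one_iff₀]; right; exact hp1)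
    obtain ⟨x, hxo, hx⟩ := happrox k
    refine ⟨x, hxo, ?_⟩
    rw [dist_pi_lt_iff hε]
    intro i
    calc dist (y i) (x i) = ‖y i - x i‖ := dist_eq_norm _ _
      _ ≤ (p : ℝ) ^ (-(N + 1 + k : ℕ) : ℤ) := by
          rw [PadicInt.norm_le_pow_iff_mem_span_pow, Ideal.mem_span_singleton]
          exact hx i
      _ ≤ (p : ℝ) ^ (-(k : ℕ) : ℤ) := by
          apply zpow_le_zpow_right₀ hp1.le
          omega
      _ = ((p : ℝ)⁻¹) ^ k := by rw [_root_.zpow_neg, zpow_natCast, inv_pow]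
      _ < ε := hk
  intro z hz
  have hopen : IsOpen (glOrbit p d Γ z) := by
    rw [Metric.isOpen_iff]
    intro x hx
    refine ⟨(p : ℝ) ^ (-(N + 1 : ℕ) : ℤ), by positivity, fun y hy => ?_⟩
    have hxU : x ∈ U := by
      rw [hU]
      have hz' : ∃ i, ¬ (p : ℤ_[p]) ∣ z i := by have h := hz; rwa [hU] at h
      exact aux_orbit_notdvd p d Γ hz' hx
    have hyx : ∀ i, (p : ℤ_[p]) ^ (N + 1) ∣ y i - x i := by
      intro i
      rw [← Ideal.mem_span_singleton, ← PadicInt.norm_le_pow_iff_mem_span_pow]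
      calc ‖y i - x i‖ = dist (y i) (x i) := (dist_eq_norm _ _).symm
        _ ≤ dist y x := dist_le_pi_dist y x i
        _ ≤ (p : ℝ) ^ (-(N + 1 : ℕ) : ℤ) := le_of_lt (Metric.mem_ball.mp hy)
    have hmem := key x hxU y hyx
    rwa [aux_orbit_trans p d Γ hx] at hmem
  exact hopen.preimage continuous_subtype_val
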